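/- Let n ≥ 1 and let R : ℂⁿ × ℂⁿ × ℂⁿ × ℂⁿ → ℂ be a curvature-type form satisfying the Hermitian symmetry conj( R(X, Y, Z, W) ) = R(Y, X, W, Z) for all X, Y, Z, W ∈ ℂⁿ. Then the following are equivalent: (a) Re( R(v, v, v, v) ) > 0 for every nonzero vector v ∈ ℂⁿ; (b) for every orthonormal basis (e₁, …, eₙ) of ℂⁿ and every vector b ∈ ℝⁿ with b_i ≥ 0 for all i and b ≠ 0, one has Σ_{i,k=1}^{n} Re( R(e_i, e_i, e_k, e_k) + R(e_i, e_k, e_k, e_i) ) b_i b_k > 0. -/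

import Mathlib

open scoped ComplexConjugate BigOperators

structure CurvatureForm (n : ℕ) where
  R : EuclideanSpace ℂ (Fin n) → EuclideanSpace ℂ (Fin n) → EuclideanSpace ℂ (Fin n) →
      EuclideanSpace ℂ (Fin n) → ℂ
  add_fst : ∀ X X' Y Z W, R (X + X') Y Z W = R X Y Z W + R X' Y Z W
  smul_fst : ∀ (c : ℂ) (X Y Z W), R (c • X) Y Z W = c * R X Y Z W
  add_snd : ∀ X Y Y' Z W, R X (Y + Y') Z W = R X Y Z W + R X Y' Z W
  smul_snd : ∀ (c : ℂ) (X Y Z W), R X (c • Y) Z W = conj c * R X Y Z W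
  add_trd : ∀ X Y Z Z' W, R X Y (Z + Z') W = R X Y Z W + R X Y Z' W
  smul_trd : ∀ (c : ℂ) (X Y Z W), R X Y (c • Z) W = c * R X Y Z W
  add_fth : ∀ X Y Z W W', R X Y Z (W + W') = R X Y Z W + R X Y Z W'
  smul_fth : ∀ (c : ℂ) (X Y Z W), R X Y Z (c • W) = conj c * R X Y Z W

namespace CFaux

lemma conj_I_pow (m : ℕ) : conj (Complex.I ^ m) = Complex.I ^ (3 * m) := by
  rw [map_pow, Complex.conj_I, pow_mul]
  norm_num [pow_succ, Complex.I_sq]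

/-- the weight of coordinate `x` for the quadruple `(i,j,k,l)` -/
def wt {n : ℕ} (i j k l x : Fin n) : ℕ :=
  (if x = i then 1 else 0) + 3 * (if x = j then 1 else 0) +
    ((if x = k then 1 else 0) + 3 * (if x = l then 1 else 0))

lemma pointwise {n : ℕ} (i j k l x : Fin n) (m : ℕ) :
    Complex.I ^ (wt i j k l x * m) =
      (if x = i then Complex.I ^ m else 1) * (if x = j then Complex.I ^ (3 * m) else 1) *
        ((if x = k then Complex.I ^ m else 1) * (if x = l then Complex.I ^ (3 * m) else 1)) := by
  unfold wt
  split_ifs <;> ring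

lemma cond_iff {n : ℕ} (i j k l : Fin n) :
    (∀ x, wt i j k l x % 4 = 0) ↔ ((i = j ∧ k = l) ∨ (i = l ∧ k = j)) := by
  constructor
  · intro h
    by_cases hij : i = j
    · subst hij
      left; refine ⟨rfl, ?_⟩
      by_contra hkl
      have hk := h k
      unfold wt at hk
      split_ifs at hk <;> simp_all
    · right
      constructor
      · by_contra hil
        have hi := h i
        unfold wt at hi
        split_ifs at hi <;> simp_all
      · by_contra hkj
        have hj := h j
        have hji : ¬ j = i := fun hh => hij hh.symm
        have hjk : ¬ j = k := fun hh => hkj hh.symm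
        unfold wt at hj
        split_ifs at hj <;> simp_all
  · rintro (⟨rfl, rfl⟩ | ⟨rfl, rfl⟩) x <;>
      (unfold wt; by_cases h1 : x = i <;> by_cases h2 : x = k <;> simp [h1, h2] <;>
        split_ifs <;> omega)

lemma I_pow_four : Complex.I ^ 4 = 1 := by
  norm_num [pow_succ, Complex.I_sq]

lemma I_pow_mod (w : ℕ) : Complex.I ^ w = Complex.I ^ (w % 4) := by
  conv_lhs => rw [← Nat.div_add_mod w 4]
  rw [pow_add, pow_mul, I_pow_four, one_pow, one_mul]

lemma geom4 (w : ℕ) :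
    (∑ v : Fin 4, (Complex.I ^ w) ^ (v : ℕ)) = if w % 4 = 0 then (4 : ℂ) else 0 := by
  by_cases h : w % 4 = 0
  · have h1 : Complex.I ^ w = 1 := by rw [I_pow_mod, h, pow_zero]
    rw [if_pos h, h1]
    simp [Fin.sum_univ_four]
  · have hz4 : (Complex.I ^ w) ^ 4 = 1 := by
      rw [← pow_mul, mul_comm, pow_mul, I_pow_four, one_pow]
    have hz1 : Complex.I ^ w ≠ 1 := by
      rw [I_pow_mod]
      have h4 : w % 4 < 4 := Nat.mod_lt _ (by norm_num)
      interval_cases hw4 : (w % 4)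
      · exact absurd rfl h
      · simp [Complex.ext_iff]
      · norm_num [Complex.I_sq]
      · norm_num [pow_succ, Complex.I_sq, Complex.ext_iff]
    set z := Complex.I ^ w with hzdef
    have hsum : ∑ v : Fin 4, z ^ (v : ℕ) = 1 + z + z ^ 2 + z ^ 3 := by
      rw [Fin.sum_univ_eq_sum_range (fun m => z ^ m) 4]
      simp [Finset.sum_range_succ]
    have hfac : (z - 1) * (1 + z + z ^ 2 + z ^ 3) = z ^ 4 - 1 := by ring
    rw [hz4, sub_self] at hfac
    rcases mul_eq_zero.mp hfac with h1 | h2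
    · exact absurd (sub_eq_zero.mp h1) hz1
    · rw [if_neg h, hsum, h2]

lemma phase_sum {n : ℕ} (i j k l : Fin n) :
    (∑ f : Fin n → Fin 4,
        Complex.I ^ (f i : ℕ) * conj (Complex.I ^ (f j : ℕ)) *
          (Complex.I ^ (f k : ℕ) * conj (Complex.I ^ (f l : ℕ)))) =
      if (i = j ∧ k = l) ∨ (i = l ∧ k = j) then (4 : ℂ) ^ n else 0 := by
  have hA : ∀ f : Fin n → Fin 4,
      Complex.I ^ (f i : ℕ) * conj (Complex.I ^ (f j : ℕ)) *
          (Complex.I ^ (f k : ℕ) * conj (Complex.I ^ (f l : ℕ))) =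
        ∏ x, Complex.I ^ (wt i j k l x * (f x : ℕ)) := by
    intro f
    rw [conj_I_pow, conj_I_pow]
    rw [Finset.prod_congr rfl (fun x _ => pointwise i j k l x (f x : ℕ)),
      Finset.prod_mul_distrib, Finset.prod_mul_distrib, Finset.prod_mul_distrib,
      Finset.prod_ite_eq', Finset.prod_ite_eq', Finset.prod_ite_eq', Finset.prod_ite_eq']
    simp
  rw [Finset.sum_congr rfl (fun f _ => hA f)]
  have hB : (∑ f : Fin n → Fin 4, ∏ x, Complex.I ^ (wt i j k l x * (f x : ℕ))) =
      ∏ x, ∑ v : Fin 4, Complex.I ^ (wt i j k l x * (v : ℕ)) := by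
    rw [Finset.prod_univ_sum, Fintype.piFinset_univ]
  rw [hB]
  have hC : ∀ x : Fin n, (∑ v : Fin 4, Complex.I ^ (wt i j k l x * (v : ℕ))) =
      if wt i j k l x % 4 = 0 then (4 : ℂ) else 0 := by
    intro x
    rw [← geom4 (wt i j k l x)]
    exact Finset.sum_congr rfl fun v _ => by rw [pow_mul]
  rw [Finset.prod_congr rfl (fun x _ => hC x)]
  by_cases hP : (i = j ∧ k = l) ∨ (i = l ∧ k = j)
  · rw [if_pos hP]
    have hall := (cond_iff i j k l).mpr hP
    rw [Finset.prod_congr rfl (fun x _ => by rw [if_pos (hall x)]), Finset.prod_const]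
    simp
  · rw [if_neg hP]
    obtain ⟨x, hx⟩ : ∃ x, ¬(wt i j k l x % 4 = 0) := by
      by_contra hc; push_neg at hc
      exact hP ((cond_iff i j k l).mp fun x => hc x)
    exact Finset.prod_eq_zero (Finset.mem_univ x) (if_neg hx)

variable {n : ℕ}

lemma zero_fst (R : CurvatureForm n) (Y Z W) : R.R 0 Y Z W = 0 := by
  simpa using R.smul_fst 0 0 Y Z W

lemma zero_snd (R : CurvatureForm n) (X Z W) : R.R X 0 Z W = 0 := by
  simpa using R.smul_snd 0 X 0 Z W

lemma zero_trd (R : CurvatureForm n) (X Y W) : R.R X Y 0 W = 0 := by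
  simpa using R.smul_trd 0 X Y 0 W

lemma zero_fth (R : CurvatureForm n) (X Y Z) : R.R X Y Z 0 = 0 := by
  simpa using R.smul_fth 0 X Y Z 0

lemma sum_fst (R : CurvatureForm n) {ι : Type*} (s : Finset ι) (c : ι → ℂ)
    (u : ι → EuclideanSpace ℂ (Fin n)) (Y Z W) :
    R.R (∑ i ∈ s, c i • u i) Y Z W = ∑ i ∈ s, c i * R.R (u i) Y Z W := by
  induction s using Finset.cons_induction with
  | empty => simp [zero_fst]
  | cons i s hi ih => rw [Finset.sum_cons, R.add_fst, R.smul_fst, ih, Finset.sum_cons]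

lemma sum_snd (R : CurvatureForm n) {ι : Type*} (s : Finset ι) (c : ι → ℂ)
    (u : ι → EuclideanSpace ℂ (Fin n)) (X Z W) :
    R.R X (∑ i ∈ s, c i • u i) Z W = ∑ i ∈ s, conj (c i) * R.R X (u i) Z W := by
  induction s using Finset.cons_induction with
  | empty => simp [zero_snd]
  | cons i s hi ih => rw [Finset.sum_cons, R.add_snd, R.smul_snd, ih, Finset.sum_cons]

lemma sum_trd (R : CurvatureForm n) {ι : Type*} (s : Finset ι) (c : ι → ℂ)
    (u : ι → EuclideanSpace ℂ (Fin n)) (X Y W) :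
    R.R X Y (∑ i ∈ s, c i • u i) W = ∑ i ∈ s, c i * R.R X Y (u i) W := by
  induction s using Finset.cons_induction with
  | empty => simp [zero_trd]
  | cons i s hi ih => rw [Finset.sum_cons, R.add_trd, R.smul_trd, ih, Finset.sum_cons]

lemma sum_fth (R : CurvatureForm n) {ι : Type*} (s : Finset ι) (c : ι → ℂ)
    (u : ι → EuclideanSpace ℂ (Fin n)) (X Y Z) :
    R.R X Y Z (∑ i ∈ s, c i • u i) = ∑ i ∈ s, conj (c i) * R.R X Y Z (u i) := by
  induction s using Finset.cons_induction with
  | empty => simp [zero_fth]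
  | cons i s hi ih => rw [Finset.sum_cons, R.add_fth, R.smul_fth, ih, Finset.sum_cons]

lemma expand (R : CurvatureForm n) (c : Fin n → ℂ) (u : Fin n → EuclideanSpace ℂ (Fin n)) :
    R.R (∑ i, c i • u i) (∑ i, c i • u i) (∑ i, c i • u i) (∑ i, c i • u i)
      = ∑ i, ∑ j, ∑ k, ∑ l,
          c i * (conj (c j) * (c k * (conj (c l) * R.R (u i) (u j) (u k) (u l)))) := by
  rw [sum_fst]
  refine Finset.sum_congr rfl fun i _ => ?_
  rw [sum_snd, Finset.mul_sum]
  refine Finset.sum_congr rfl fun j _ => ?_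
  rw [sum_trd, Finset.mul_sum, Finset.mul_sum]
  refine Finset.sum_congr rfl fun k _ => ?_
  rw [sum_fth, Finset.mul_sum, Finset.mul_sum, Finset.mul_sum]

lemma sum_ite_push {ι M : Type*} [AddCommMonoid M] (s : Finset ι) (c : Prop) [Decidable c]
    (f : ι → M) :
    (∑ x ∈ s, if c then f x else 0) = if c then ∑ x ∈ s, f x else 0 := by
  split_ifs <;> simp

lemma split4 {n : ℕ} (i j k l : Fin n) (X : ℂ) :
    (if (i = j ∧ k = l) ∨ (i = l ∧ k = j) then X else 0)
      = (if i = j then (if k = l then X else 0) else 0)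
        + (if i = l then (if k = j then X else 0) else 0)
        - (if i = j then (if k = i then (if l = i then X else 0) else 0) else 0) := by
  by_cases h1 : i = j <;> by_cases h2 : k = l <;> by_cases h3 : i = l <;> by_cases h4 : k = j <;>
    simp_all <;> try ring
  exact fun h => absurd h.symm h2

lemma swap4 {n : ℕ} (F : (Fin n → Fin 4) → Fin n → Fin n → Fin n → Fin n → ℂ) :
    ∑ f, ∑ i, ∑ j, ∑ k, ∑ l, F f i j k l = ∑ i, ∑ j, ∑ k, ∑ l, ∑ f, F f i j k l := by
  rw [Finset.sum_comm]
  refine Finset.sum_congr rfl fun i _ => ?_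
  rw [Finset.sum_comm]
  refine Finset.sum_congr rfl fun j _ => ?_
  rw [Finset.sum_comm]
  refine Finset.sum_congr rfl fun k _ => ?_
  rw [Finset.sum_comm]

end CFaux

theorem stmt7 (n : ℕ) (hn : 1 ≤ n) (R : CurvatureForm n)
    (hsym : ∀ X Y Z W, conj (R.R X Y Z W) = R.R Y X W Z) :
    (∀ v : EuclideanSpace ℂ (Fin n), v ≠ 0 → 0 < (R.R v v v v).re) ↔
      (∀ (e : OrthonormalBasis (Fin n) ℂ (EuclideanSpace ℂ (Fin n))) (b : Fin n → ℝ),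
        (∀ i, 0 ≤ b i) → b ≠ 0 →
          0 < ∑ i, ∑ k,
            (R.R (e i) (e i) (e k) (e k) + R.R (e i) (e k) (e k) (e i)).re *
              b i * b k) := by
  constructor
  · -- hard direction
    intro hpos e b hb hbne
    classical
    set a : Fin n → ℝ := fun i => Real.sqrt (b i) with ha_def
    have ha2 : ∀ i, a i * a i = b i := fun i => Real.mul_self_sqrt (hb i)
    have hann : ∀ i, 0 ≤ a i := fun i => Real.sqrt_nonneg _
    set c : (Fin n → Fin 4) → Fin n → ℂ :=
      fun f i => (a i : ℂ) * Complex.I ^ (f i : ℕ) with hc_def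
    set v : (Fin n → Fin 4) → EuclideanSpace ℂ (Fin n) :=
      fun f => ∑ i, c f i • e i with hv_def
    -- nonvanishing of v f
    obtain ⟨i0, hi0⟩ := Function.ne_iff.mp hbne
    have hai0 : 0 < a i0 := Real.sqrt_pos.mpr (lt_of_le_of_ne (hb i0) (Ne.symm hi0))
    have hcne : ∀ f, c f i0 ≠ 0 := by
      intro f
      simp only [hc_def]
      exact mul_ne_zero (Complex.ofReal_ne_zero.mpr hai0.ne')
        (pow_ne_zero _ Complex.I_ne_zero)
    have hvne : ∀ f, v f ≠ 0 := by
      intro f hf0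
      have horth := orthonormal_iff_ite.mp e.orthonormal
      have hinner : (inner ℂ (e i0) (v f) : ℂ) = c f i0 := by
        simp only [hv_def, inner_sum, inner_smul_right, horth]
        simp [Finset.sum_ite_eq, mul_ite, mul_one, mul_zero]
      rw [hf0, inner_zero_right] at hinner
      exact hcne f hinner.symm
    -- expansion of each term
    have hexp : ∀ f, R.R (v f) (v f) (v f) (v f)
        = ∑ i, ∑ j, ∑ k, ∑ l,
            c f i * (conj (c f j) * (c f k * (conj (c f l) *
              R.R (e i) (e j) (e k) (e l)))) := fun f => CFaux.expand R (c f) e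
    -- coefficient sum
    have hco : ∀ i j k l : Fin n,
        (∑ f : Fin n → Fin 4, c f i * conj (c f j) * (c f k * conj (c f l)))
          = (a i : ℂ) * a j * a k * a l *
              (if (i = j ∧ k = l) ∨ (i = l ∧ k = j) then (4 : ℂ) ^ n else 0) := by
      intro i j k l
      rw [← CFaux.phase_sum i j k l, Finset.mul_sum]
      refine Finset.sum_congr rfl fun f _ => ?_
      simp only [hc_def, map_mul, Complex.conj_ofReal]
      ring
    have hterm : ∀ i j k l : Fin n,
        (∑ f : Fin n → Fin 4, c f i * (conj (c f j) * (c f k * (conj (c f l) *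
            R.R (e i) (e j) (e k) (e l)))))
          = if (i = j ∧ k = l) ∨ (i = l ∧ k = j) then
              (4 : ℂ) ^ n * ((a i : ℂ) * a j * a k * a l) * R.R (e i) (e j) (e k) (e l)
            else 0 := by
      intro i j k l
      have h1 : (∑ f : Fin n → Fin 4, c f i * (conj (c f j) * (c f k * (conj (c f l) *
          R.R (e i) (e j) (e k) (e l)))))
          = (∑ f : Fin n → Fin 4, c f i * conj (c f j) * (c f k * conj (c f l))) *
              R.R (e i) (e j) (e k) (e l) := by
        rw [Finset.sum_mul]
        exact Finset.sum_congr rfl fun f _ => by ring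
      rw [h1, hco]
      split_ifs <;> ring
    -- the key complex identity
    have key : (∑ f : Fin n → Fin 4, R.R (v f) (v f) (v f) (v f))
        = ∑ i, ∑ k, (4 : ℂ) ^ n * ((a i : ℂ) * a i * a k * a k) *
              (R.R (e i) (e i) (e k) (e k) + R.R (e i) (e k) (e k) (e i))
          - ∑ i, (4 : ℂ) ^ n * ((a i : ℂ) * a i * a i * a i) *
              R.R (e i) (e i) (e i) (e i) := by
      calc (∑ f : Fin n → Fin 4, R.R (v f) (v f) (v f) (v f))
          = ∑ f : Fin n → Fin 4, ∑ i, ∑ j, ∑ k, ∑ l,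
              c f i * (conj (c f j) * (c f k * (conj (c f l) *
                R.R (e i) (e j) (e k) (e l)))) := Finset.sum_congr rfl fun f _ => hexp f
        _ = ∑ i, ∑ j, ∑ k, ∑ l, ∑ f : Fin n → Fin 4,
              c f i * (conj (c f j) * (c f k * (conj (c f l) *
                R.R (e i) (e j) (e k) (e l)))) := CFaux.swap4 _
        _ = ∑ i, ∑ j, ∑ k, ∑ l,
              ((if i = j then (if k = l then (4 : ℂ) ^ n * ((a i : ℂ) * a j * a k * a l) *
                    R.R (e i) (e j) (e k) (e l) else 0) else 0)
                + (if i = l then (if k = j then (4 : ℂ) ^ n * ((a i : ℂ) * a j * a k * a l) *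
                    R.R (e i) (e j) (e k) (e l) else 0) else 0)
                - (if i = j then (if k = i then (if l = i then
                    (4 : ℂ) ^ n * ((a i : ℂ) * a j * a k * a l) *
                      R.R (e i) (e j) (e k) (e l) else 0) else 0) else 0)) := by
            refine Finset.sum_congr rfl fun i _ => Finset.sum_congr rfl fun j _ =>
              Finset.sum_congr rfl fun k _ => Finset.sum_congr rfl fun l _ => ?_
            rw [hterm i j k l, CFaux.split4]
        _ = ∑ i, ∑ k, (4 : ℂ) ^ n * ((a i : ℂ) * a i * a k * a k) *
              (R.R (e i) (e i) (e k) (e k) + R.R (e i) (e k) (e k) (e i))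
            - ∑ i, (4 : ℂ) ^ n * ((a i : ℂ) * a i * a i * a i) *
              R.R (e i) (e i) (e i) (e i) := by
            simp only [Finset.sum_add_distrib, Finset.sum_sub_distrib, CFaux.sum_ite_push,
              Finset.sum_ite_eq, Finset.sum_ite_eq', Finset.mem_univ, if_true]
            congr 1
            rw [← Finset.sum_add_distrib]
            refine Finset.sum_congr rfl fun i _ => ?_
            rw [← Finset.sum_add_distrib]
            refine Finset.sum_congr rfl fun k _ => ?_
            ring
    -- pass to real parts
    have h4 : (0:ℝ) < 4 ^ n := by positivity
    have hT : 0 < (∑ f : Fin n → Fin 4, R.R (v f) (v f) (v f) (v f)).re := by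
      rw [Complex.re_sum]
      exact Finset.sum_pos (fun f _ => hpos (v f) (hvne f)) Finset.univ_nonempty
    have hD : 0 ≤ ∑ i, (4:ℝ)^n * (a i * a i * a i * a i) * (R.R (e i) (e i) (e i) (e i)).re := by
      refine Finset.sum_nonneg fun i _ => ?_
      have hei : e i ≠ 0 := by
        have h1 : ‖e i‖ = 1 := e.orthonormal.1 i
        intro h0; rw [h0] at h1; simp at h1
      have hre := (hpos (e i) hei).le
      have hx : (0:ℝ) ≤ a i * a i * a i * a i := by positivity
      exact mul_nonneg (mul_nonneg h4.le hx) hre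
    have hre : (∑ f : Fin n → Fin 4, R.R (v f) (v f) (v f) (v f)).re
        = (4:ℝ)^n * (∑ i, ∑ k,
              (R.R (e i) (e i) (e k) (e k) + R.R (e i) (e k) (e k) (e i)).re * b i * b k)
          - ∑ i, (4:ℝ)^n * (a i * a i * a i * a i) * (R.R (e i) (e i) (e i) (e i)).re := by
      rw [key, Complex.sub_re, Complex.re_sum, Complex.re_sum, Finset.mul_sum]
      congr 1
      · refine Finset.sum_congr rfl fun i _ => ?_
        rw [Complex.re_sum, Finset.mul_sum]
        refine Finset.sum_congr rfl fun k _ => ?_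
        have hcst : ((4:ℂ)^n * ((a i:ℂ) * a i * (a k) * (a k)))
            = (((4:ℝ)^n * (a i * a i * a k * a k) : ℝ) : ℂ) := by push_cast; ring
        rw [hcst, Complex.re_ofReal_mul, ← ha2 i, ← ha2 k]
        ring
      · refine Finset.sum_congr rfl fun i _ => ?_
        have hcst : ((4:ℂ)^n * ((a i:ℂ) * a i * (a i) * (a i)))
            = (((4:ℝ)^n * (a i * a i * a i * a i) : ℝ) : ℂ) := by push_cast; ring
        rw [hcst, Complex.re_ofReal_mul]
    rw [hre] at hT
    have hQpos : 0 < (4:ℝ)^n * (∑ i, ∑ k,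
        (R.R (e i) (e i) (e k) (e k) + R.R (e i) (e k) (e k) (e i)).re * b i * b k) := by
      linarith
    rcases mul_pos_iff.mp hQpos with ⟨_, hQ⟩ | ⟨h4neg, _⟩
    · exact hQ
    · linarith
  · -- easy direction
    intro h v hv
    haveI : NeZero n := ⟨Nat.one_le_iff_ne_zero.mp hn⟩
    have hvn : ‖v‖ ≠ 0 := norm_ne_zero_iff.mpr hv
    set u : EuclideanSpace ℂ (Fin n) := (‖v‖ : ℂ)⁻¹ • v with hu_def
    have hofR : ((‖v‖ : ℂ)) ≠ 0 := Complex.ofReal_ne_zero.mpr hvn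
    have hun : ‖u‖ = 1 := by
      rw [hu_def, norm_smul, norm_inv]
      rw [Complex.norm_real]
      rw [Real.norm_eq_abs, abs_of_nonneg (norm_nonneg v)]
      field_simp
    have horth : Orthonormal ℂ (Set.restrict {(0 : Fin n)} fun _ : Fin n => u) := by
      constructor
      · intro i; exact hun
      · intro i j hij
        exact absurd (Subsingleton.elim i j) hij
    obtain ⟨e, he⟩ := horth.exists_orthonormalBasis_extension_of_card_eq
      (by simp [finrank_euclideanSpace_fin])
    have he0 : e 0 = u := he 0 (by simp)
    have hbnn : ∀ i : Fin n, 0 ≤ (if i = (0:Fin n) then (1:ℝ) else 0) := by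
      intro i; split_ifs <;> norm_num
    have hbne : (fun i : Fin n => if i = (0:Fin n) then (1:ℝ) else 0) ≠ 0 := by
      intro hfz
      have := congrFun hfz 0
      simp at this
    have hsum := h e _ hbnn hbne
    simp only [mul_ite, mul_one, mul_zero, ite_mul, zero_mul, CFaux.sum_ite_push,
      Finset.sum_ite_eq', Finset.mem_univ, if_true, he0] at hsum
    have h2 : 0 < (R.R u u u u).re := by
      rw [Complex.add_re] at hsum
      linarith
    have hvu : ((‖v‖ : ℂ)) • u = v := by
      rw [hu_def, smul_smul, mul_inv_cancel₀ hofR, one_smul]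
    rw [← hvu, R.smul_fst, R.smul_snd, R.smul_trd, R.smul_fth, Complex.conj_ofReal]
    have hcst : ((‖v‖:ℂ) * ((‖v‖:ℂ) * ((‖v‖:ℂ) * ((‖v‖:ℂ) * R.R u u u u))))
        = ((‖v‖^4 : ℝ) : ℂ) * R.R u u u u := by push_cast; ring
    rw [hcst, Complex.re_ofReal_mul]
    exact mul_pos (pow_pos (norm_pos_iff.mpr hv) 4) h2
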